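/- The group Z^n (n ≥ 1) with its standard generating set is not a TS group: for every element ξ ∈ Z^n there exists a finite ξ-related set S with L(S) ≤ 2|S|, where L(S) is the length of the shortest closed path in the Cayley graph visiting every element of S. -/

import Mathlib

/-- A single step in the Cayley graph of `G` with respect to the generating set `X`
(steps may use generators or their inverses). -/
def Step {G : Type*} [Group G] (X : Set G) (g h : G) : Prop :=
  ∃ s ∈ X, h = g * s ∨ h = g * s⁻¹

/-- `β` is a walk of length `n` in the Cayley graph. -/
def IsWalk {G : Type*} [Group G] (X : Set G) (β : ℕ → G) (n : ℕ) : Prop :=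
  ∀ i < n, Step X (β i) (β (i + 1))

/-- `β` is a closed walk of length `n` in the Cayley graph. -/
def IsClosedWalk {G : Type*} [Group G] (X : Set G) (β : ℕ → G) (n : ℕ) : Prop :=
  IsWalk X β n ∧ β 0 = β n

/-- The walk `β` (of length `n`) passes through every element of `S`. -/
def Visits {G : Type*} (β : ℕ → G) (n : ℕ) (S : Finset G) : Prop :=
  ∀ s ∈ S, ∃ i ≤ n, β i = s

/-- `S` is `ξ`-related: every `x ∈ S` has a `ξ`-neighbour `y ∈ S`. -/
def Related {G : Type*} [Group G] (ξ : G) (S : Finset G) : Prop :=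
  ∀ x ∈ S, ∃ y ∈ S, y⁻¹ * x = ξ ∨ y⁻¹ * x = ξ⁻¹

/-- Word length of `g` with respect to the generating set `X`. -/
noncomputable def wordLength {G : Type*} [Group G] (X : Set G) (g : G) : ℕ :=
  sInf {n | ∃ β : ℕ → G, β 0 = 1 ∧ β n = g ∧ IsWalk X β n}


open Multiplicative

namespace Stmt6

variable {n : ℕ}

/-- the generating set -/
def gen (n : ℕ) : Set (Multiplicative (Fin n → ℤ)) :=
  {g | ∃ i : Fin n, g = Multiplicative.ofAdd (Pi.single i 1)}

lemma nsmul_single (k : ℕ) (i : Fin n) :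
    (k • Pi.single i (1:ℤ) : Fin n → ℤ) = Pi.single i (k : ℤ) := by
  ext j; by_cases h : j = i <;> simp [Pi.single_apply, h]

/-- a list of unit steps with sum `w` -/
def stepList (w : Fin n → ℤ) : List (Fin n → ℤ) :=
  (List.finRange n).flatMap fun i =>
    List.replicate (w i).natAbs (if 0 ≤ w i then Pi.single i 1 else -Pi.single i 1)

lemma mem_stepList {w : Fin n → ℤ} {a : Fin n → ℤ} (ha : a ∈ stepList w) :
    ∃ i, a = Pi.single i 1 ∨ a = -Pi.single i 1 := by
  rw [stepList, List.mem_flatMap] at ha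
  obtain ⟨i, -, hi⟩ := ha
  rw [List.mem_replicate] at hi
  refine ⟨i, ?_⟩
  rcases le_or_gt 0 (w i) with h | h
  · left; rw [hi.2, if_pos h]
  · right; rw [hi.2, if_neg (not_le.mpr h)]

lemma sum_stepList (w : Fin n → ℤ) : (stepList w).sum = w := by
  rw [stepList, List.flatMap, List.sum_flatten, List.map_map]
  have key : ∀ i : Fin n,
      (List.sum ∘ fun i => List.replicate (w i).natAbs
        (if 0 ≤ w i then (Pi.single i 1 : Fin n → ℤ) else -Pi.single i 1)) i
        = Pi.single i (w i) := by
    intro i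
    simp only [Function.comp, List.sum_replicate]
    rcases le_or_gt 0 (w i) with h | h
    · rw [if_pos h, nsmul_single, Int.natAbs_of_nonneg h]
    · have hn : ((w i).natAbs : ℤ) = -(w i) := by omega
      rw [if_neg (not_le.mpr h), smul_neg, nsmul_single, hn, ← Pi.single_neg, neg_neg]
  calc (List.map _ (List.finRange n)).sum
      = (List.map (fun i => (Pi.single i (w i) : Fin n → ℤ)) (List.finRange n)).sum := by
        rw [List.map_congr_left fun i _ => key i]
    _ = ∑ i, Pi.single i (w i) := rfl
    _ = w := Finset.univ_sum_single w

lemma length_stepList (w : Fin n → ℤ) : (stepList w).length = ∑ i, (w i).natAbs := by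
  rw [stepList, List.length_flatMap]
  calc (List.map _ (List.finRange n)).sum
      = (List.map (fun i => (w i).natAbs) (List.finRange n)).sum := by
        refine congrArg _ (List.map_congr_left fun i _ => ?_)
        simp
    _ = ∑ i, (w i).natAbs := rfl

/-- the walk obtained from a list of steps -/
def walk (L : List (Fin n → ℤ)) : ℕ → Multiplicative (Fin n → ℤ) :=
  fun t => Multiplicative.ofAdd ((L.take t).sum)

lemma walk_isWalk (L : List (Fin n → ℤ))
    (h : ∀ a ∈ L, ∃ i, a = Pi.single i 1 ∨ a = -Pi.single i 1) :
    IsWalk (gen n) (walk L) L.length := by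
  intro t ht
  obtain ⟨i, hi⟩ := h (L.get ⟨t, ht⟩) (L.get_mem _)
  refine ⟨Multiplicative.ofAdd (Pi.single i 1), ⟨i, rfl⟩, ?_⟩
  have hsum : (L.take (t+1)).sum = (L.take t).sum + L.get ⟨t, ht⟩ :=
    List.sum_take_succ L t ht
  rcases hi with hi | hi
  · left
    show Multiplicative.ofAdd _ = Multiplicative.ofAdd _ * Multiplicative.ofAdd _
    rw [← ofAdd_add, hsum, hi]
  · right
    show Multiplicative.ofAdd _ = Multiplicative.ofAdd _ * (Multiplicative.ofAdd _)⁻¹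
    rw [← ofAdd_neg, ← ofAdd_add, hsum, hi]

lemma walk_closed (L : List (Fin n → ℤ)) (hL : L.sum = 0)
    (h : ∀ a ∈ L, ∃ i, a = Pi.single i 1 ∨ a = -Pi.single i 1) :
    IsClosedWalk (gen n) (walk L) L.length := by
  refine ⟨walk_isWalk L h, ?_⟩
  show Multiplicative.ofAdd _ = Multiplicative.ofAdd _
  rw [List.take_zero, List.take_of_length_le le_rfl, List.sum_nil, hL]

end Stmt6

namespace Stmt6

variable {n : ℕ}

lemma inv_mul_ofAdd (x y : Fin n → ℤ) :
    (Multiplicative.ofAdd x)⁻¹ * Multiplicative.ofAdd y = Multiplicative.ofAdd (y - x) := by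
  rw [← ofAdd_neg, ← ofAdd_add]
  congr 1
  abel

lemma case_single (i₀ : Fin n) (d : ℤ) (hd : d ≠ 0) :
    ∃ S : Finset (Multiplicative (Fin n → ℤ)), S.Nonempty ∧
      Related (Multiplicative.ofAdd (Pi.single i₀ d)) S ∧
      ∃ (β : ℕ → Multiplicative (Fin n → ℤ)) (m : ℕ),
        IsClosedWalk (gen n) β m ∧ Visits β m S ∧ m ≤ 2 * S.card := by
  set D := d.natAbs with hDdef
  have hD1 : 1 ≤ D := by simp only [hDdef]; omega
  set J := 2 * D with hJdef
  set f : ℕ → Multiplicative (Fin n → ℤ) :=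
    fun j => Multiplicative.ofAdd (Pi.single i₀ (j : ℤ)) with hf
  have hfinj : Function.Injective f := by
    intro a b hab
    have h2 : (Pi.single i₀ (a:ℤ) : Fin n → ℤ) = Pi.single i₀ (b:ℤ) := hab
    have h3 := congrFun h2 i₀
    simp only [Pi.single_eq_same, Int.natCast_inj] at h3
    exact h3
  have hdiff : ∀ a b : ℕ, (f a)⁻¹ * f b =
      Multiplicative.ofAdd (Pi.single i₀ ((b : ℤ) - a)) := by
    intro a b
    rw [hf, inv_mul_ofAdd]
    congr 1
    ext k
    by_cases hk : k = i₀ <;> simp [Pi.single_apply, hk]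
  have hsign : d = (D : ℤ) ∨ d = -(D : ℤ) := Int.natAbs_eq d
  refine ⟨(Finset.range J).image f, ?_, ?_, ?_⟩
  · exact ⟨f 0, Finset.mem_image_of_mem f (Finset.mem_range.mpr (by omega))⟩
  · -- Related
    intro x hx
    simp only [Finset.mem_image, Finset.mem_range] at hx
    obtain ⟨j, hj, rfl⟩ := hx
    rcases lt_or_ge j D with hcase | hcase
    · refine ⟨f (j + D), Finset.mem_image_of_mem f (Finset.mem_range.mpr (by omega)), ?_⟩
      have key : (f (j + D))⁻¹ * f j = Multiplicative.ofAdd (Pi.single i₀ (-(D:ℤ))) := by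
        rw [hdiff]
        congr 1
        congr 1
        push_cast
        ring_nf
      rcases hsign with h | h
      · right
        rw [key, ← ofAdd_neg]
        congr 1
        rw [← Pi.single_neg, h]
      · left
        rw [key]
        congr 1
        rw [h]
    · refine ⟨f (j - D), Finset.mem_image_of_mem f (Finset.mem_range.mpr (by omega)), ?_⟩
      have key : (f (j - D))⁻¹ * f j = Multiplicative.ofAdd (Pi.single i₀ ((D:ℤ))) := by
        rw [hdiff]
        congr 1
        congr 1
        rw [Nat.cast_sub hcase]
        ring
      rcases hsign with h | h
      · left
        rw [key, h]
      · right
        rw [key, ← ofAdd_neg]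
        congr 1
        rw [← Pi.single_neg, h, neg_neg]
  · -- the walk
    set u : Fin n → ℤ := Pi.single i₀ 1 with hu
    set L : List (Fin n → ℤ) := List.replicate (J-1) u ++ List.replicate (J-1) (-u) with hL
    have hmem : ∀ a ∈ L, ∃ i, a = Pi.single i 1 ∨ a = -Pi.single i 1 := by
      intro a ha
      rw [hL, List.mem_append, List.mem_replicate, List.mem_replicate] at ha
      rcases ha with ha | ha
      · exact ⟨i₀, Or.inl ha.2⟩
      · exact ⟨i₀, Or.inr ha.2⟩
    have hsum : L.sum = 0 := by
      rw [hL, List.sum_append, List.sum_replicate, List.sum_replicate, smul_neg]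
      exact add_neg_cancel _
    have hlen : L.length = (J-1) + (J-1) := by
      rw [hL, List.length_append, List.length_replicate, List.length_replicate]
    refine ⟨walk L, L.length, walk_closed L hsum hmem, ?_, ?_⟩
    · -- Visits
      intro s hs
      simp only [Finset.mem_image, Finset.mem_range] at hs
      obtain ⟨j, hj, rfl⟩ := hs
      refine ⟨j, by omega, ?_⟩
      have htake : L.take j = List.replicate j u := by
        rw [hL, List.take_append_of_le_length (by rw [List.length_replicate]; omega),
          List.take_replicate, inf_eq_left.mpr (by omega)]
      show Multiplicative.ofAdd _ = _
      rw [htake, List.sum_replicate, hu, nsmul_single]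
    · rw [hlen, Finset.card_image_of_injective _ hfinj, Finset.card_range]
      omega

end Stmt6

namespace Stmt6

variable {n : ℕ}

lemma case_two (w : Fin n → ℤ) (i₀ i₁ : Fin n) (h01 : i₀ ≠ i₁) (h0 : w i₀ ≠ 0) :
    ∃ S : Finset (Multiplicative (Fin n → ℤ)), S.Nonempty ∧
      Related (Multiplicative.ofAdd w) S ∧
      ∃ (β : ℕ → Multiplicative (Fin n → ℤ)) (m : ℕ),
        IsClosedWalk (gen n) β m ∧ Visits β m S ∧ m ≤ 2 * S.card := by
  classical
  set J := ∑ i, (w i).natAbs with hJdef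
  have hJ1 : 1 ≤ J := by
    have h2 : (w i₀).natAbs ≤ J :=
      Finset.single_le_sum (f := fun i => (w i).natAbs) (fun _ _ => Nat.zero_le _)
        (Finset.mem_univ i₀)
    omega
  set e : Fin n → ℤ := Pi.single i₁ 1 with he
  set f : ℕ → Multiplicative (Fin n → ℤ) :=
    fun j => Multiplicative.ofAdd (Pi.single i₁ (j : ℤ)) with hf
  set g : ℕ → Multiplicative (Fin n → ℤ) :=
    fun j => Multiplicative.ofAdd (w + Pi.single i₁ (j : ℤ)) with hg
  have hfinj : Function.Injective f := by
    intro a b hab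
    have h2 : (Pi.single i₁ (a:ℤ) : Fin n → ℤ) = Pi.single i₁ (b:ℤ) := hab
    have h3 := congrFun h2 i₁
    simp only [Pi.single_eq_same, Int.natCast_inj] at h3
    exact h3
  have hginj : Function.Injective g := by
    intro a b hab
    have h2 : w + (Pi.single i₁ (a:ℤ) : Fin n → ℤ) = w + Pi.single i₁ (b:ℤ) := hab
    have h3 := congrFun h2 i₁
    simp only [Pi.add_apply, Pi.single_eq_same, add_right_inj, Int.natCast_inj] at h3
    exact h3
  set S : Finset (Multiplicative (Fin n → ℤ)) :=
    (Finset.range J).image f ∪ (Finset.range J).image g with hS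
  have hdisj : Disjoint ((Finset.range J).image f) ((Finset.range J).image g) := by
    rw [Finset.disjoint_left]
    intro x hx hx'
    simp only [Finset.mem_image, Finset.mem_range] at hx hx'
    obtain ⟨a, -, ha⟩ := hx
    obtain ⟨b, -, hb⟩ := hx'
    rw [← hb] at ha
    have h2 : (Pi.single i₁ (a:ℤ) : Fin n → ℤ) = w + Pi.single i₁ (b:ℤ) := ha
    have h3 := congrFun h2 i₀
    simp only [Pi.add_apply, Pi.single_apply, if_neg h01, add_zero, add_zero] at h3
    exact h0 (by omega)
  have hcard : S.card = 2 * J := by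
    rw [hS, Finset.card_union_of_disjoint hdisj,
      Finset.card_image_of_injective _ hfinj, Finset.card_image_of_injective _ hginj,
      Finset.card_range]
    omega
  refine ⟨S, ?_, ?_, ?_⟩
  · exact ⟨f 0, Finset.mem_union_left _ (Finset.mem_image_of_mem f
      (Finset.mem_range.mpr (by omega)))⟩
  · -- Related
    intro x hx
    rw [hS, Finset.mem_union] at hx
    rcases hx with hx | hx
    · simp only [Finset.mem_image, Finset.mem_range] at hx
      obtain ⟨j, hj, rfl⟩ := hx
      refine ⟨g j, Finset.mem_union_right _ (Finset.mem_image_of_mem g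
        (Finset.mem_range.mpr hj)), Or.inr ?_⟩
      rw [hf, hg, inv_mul_ofAdd, ← ofAdd_neg]
      congr 1
      abel
    · simp only [Finset.mem_image, Finset.mem_range] at hx
      obtain ⟨j, hj, rfl⟩ := hx
      refine ⟨f j, Finset.mem_union_left _ (Finset.mem_image_of_mem f
        (Finset.mem_range.mpr hj)), Or.inl ?_⟩
      rw [hf, hg, inv_mul_ofAdd]
      congr 1
      abel
  · -- the walk
    set L : List (Fin n → ℤ) :=
      List.replicate (J-1) e ++ (stepList w ++ (List.replicate (J-1) (-e) ++ stepList (-w)))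
      with hL
    have hmem : ∀ a ∈ L, ∃ i, a = Pi.single i 1 ∨ a = -Pi.single i 1 := by
      intro a ha
      rw [hL] at ha
      simp only [List.mem_append, List.mem_replicate] at ha
      rcases ha with ha | ha | ha | ha
      · exact ⟨i₁, Or.inl ha.2⟩
      · exact mem_stepList ha
      · exact ⟨i₁, Or.inr ha.2⟩
      · exact mem_stepList ha
    have hsum : L.sum = 0 := by
      rw [hL]
      simp only [List.sum_append, List.sum_replicate, sum_stepList, smul_neg]
      abel
    have hlenw : (stepList w).length = J := length_stepList w
    have hlenw' : (stepList (-w)).length = J := by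
      rw [length_stepList, hJdef]
      simp [Int.natAbs_neg]
    have hlen : L.length = (J-1) + (J + ((J-1) + J)) := by
      rw [hL]
      simp only [List.length_append, List.length_replicate, hlenw, hlenw']
    refine ⟨walk L, L.length, walk_closed L hsum hmem, ?_, ?_⟩
    · -- Visits
      intro s hs
      rw [hS, Finset.mem_union] at hs
      rcases hs with hs | hs
      · simp only [Finset.mem_image, Finset.mem_range] at hs
        obtain ⟨j, hj, rfl⟩ := hs
        refine ⟨j, by omega, ?_⟩
        have htake : L.take j = List.replicate j e := by
          rw [hL, List.take_append_of_le_length (by rw [List.length_replicate]; omega),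
            List.take_replicate, inf_eq_left.mpr (by omega)]
        show Multiplicative.ofAdd _ = _
        rw [htake, List.sum_replicate, he, nsmul_single]
      · simp only [Finset.mem_image, Finset.mem_range] at hs
        obtain ⟨j, hj, rfl⟩ := hs
        refine ⟨(J-1) + (J + (J-1-j)), by omega, ?_⟩
        have htake : L.take ((J-1) + (J + (J-1-j))) =
            List.replicate (J-1) e ++ (stepList w ++ List.replicate (J-1-j) (-e)) := by
          rw [hL, List.take_append,
            List.take_of_length_le (by rw [List.length_replicate]; omega),
            List.length_replicate, Nat.add_sub_cancel_left,
            List.take_append (l₁ := stepList w),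
            List.take_of_length_le (by rw [hlenw]; omega), hlenw, Nat.add_sub_cancel_left,
            List.take_append_of_le_length (by rw [List.length_replicate]; omega),
            List.take_replicate, inf_eq_left.mpr (by omega)]
        show Multiplicative.ofAdd _ = _
        rw [htake]
        simp only [List.sum_append, List.sum_replicate, sum_stepList, smul_neg, he,
          nsmul_single]
        congr 1
        have hcast : (Pi.single i₁ ((J-1 : ℕ) : ℤ) : Fin n → ℤ) +
            -(Pi.single i₁ ((J-1-j : ℕ) : ℤ)) = Pi.single i₁ (j : ℤ) := by
          rw [← Pi.single_neg, ← Pi.single_add]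
          exact congrArg _ (by omega)
        rw [← hcast]
        abel
    · rw [hlen, hcard]
      omega

end Stmt6

/-- `ℤⁿ` (`n ≥ 1`, written multiplicatively) with its standard generating set is
not a TS group: for every `ξ` there is a nonempty finite `ξ`-related set `S`
admitting a closed walk through all of `S` of length at most `2|S|`. -/
theorem stmt_6 (n : ℕ) (hn : 1 ≤ n) (ξ : Multiplicative (Fin n → ℤ)) :
    ∃ S : Finset (Multiplicative (Fin n → ℤ)), S.Nonempty ∧ Related ξ S ∧
      ∃ (β : ℕ → Multiplicative (Fin n → ℤ)) (m : ℕ),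
        IsClosedWalk {g | ∃ i : Fin n, g = Multiplicative.ofAdd (Pi.single i 1)} β m ∧
        Visits β m S ∧ m ≤ 2 * S.card := by
  classical
  set w : Fin n → ℤ := Multiplicative.toAdd ξ with hw
  have hξ : Multiplicative.ofAdd w = ξ := rfl
  by_cases hw0 : w = 0
  · -- ξ = 1 : take S = {ξ}
    have hξ1 : ξ = 1 := by rw [← hξ, hw0, ofAdd_zero]
    refine ⟨{ξ}, Finset.singleton_nonempty ξ, ?_, fun _ => 1, 0, ?_, ?_, ?_⟩
    · intro x hx
      rw [Finset.mem_singleton] at hx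
      subst hx
      exact ⟨x, Finset.mem_singleton_self x, Or.inl (by rw [inv_mul_cancel, hξ1])⟩
    · exact ⟨fun i hi => absurd hi (by omega), rfl⟩
    · intro s hs
      rw [Finset.mem_singleton] at hs
      exact ⟨0, le_rfl, by rw [hs, hξ1]⟩
    · simp
  · have hex : ∃ i₀, w i₀ ≠ 0 := by
      by_contra hc
      push_neg at hc
      exact hw0 (funext hc)
    obtain ⟨i₀, h0⟩ := hex
    rw [← hξ]
    by_cases hB : ∃ i₁, i₁ ≠ i₀ ∧ w i₁ ≠ 0
    · obtain ⟨i₁, h01, h1⟩ := hB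
      exact Stmt6.case_two w i₁ i₀ h01 h1
    · push_neg at hB
      have hws : w = Pi.single i₀ (w i₀) := by
        funext j
        by_cases hj : j = i₀
        · subst hj; simp
        · rw [hB j hj, Pi.single_apply, if_neg hj]
      rw [hws]
      exact Stmt6.case_single i₀ (w i₀) h0
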